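/- The Choquet-type trace is additive on sums of monotone increasing functional calculi: for any positive semidefinite a ∈ Mₙ(ℂ) and any monotone increasing real functions f, g on the spectrum of a with f, g ≥ 0, one has φ_α(f(a) + g(a)) = φ_α(f(a)) + φ_α(g(a)), where f(a) denotes the functional calculus. -/

import Mathlib

open Matrix BigOperators Finset
open scoped ComplexOrder

/-- The `i`-th largest eigenvalue (0-indexed) of a Hermitian matrix. -/
noncomputable def eigDesc {n : ℕ} (a : Matrix (Fin n) (Fin n) ℂ) (ha : a.IsHermitian) (i : Fin n) : ℝ :=
  ha.eigenvalues (Tuple.sort ha.eigenvalues i.rev)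

/-- Eigenvalues in decreasing order, extended by `0` beyond the size. `eigN a ha i = λ_{i+1}(a)`. -/
noncomputable def eigN {n : ℕ} (a : Matrix (Fin n) (Fin n) ℂ) (ha : a.IsHermitian) (i : ℕ) : ℝ :=
  if h : i < n then eigDesc a ha ⟨i, h⟩ else 0

/-- The non-linear trace of Choquet type:
`φ_α(a) = ∑_{i=1}^{n-1} (λ_i(a) - λ_{i+1}(a)) α(i) + λ_n(a) α(n)`. -/
noncomputable def choquetTrace {n : ℕ} (α : ℕ → ℝ) (a : Matrix (Fin n) (Fin n) ℂ)
    (ha : a.IsHermitian) : ℝ :=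
  ∑ i ∈ Finset.range n, (eigN a ha i - eigN a ha (i + 1)) * α (i + 1)

/-- Functional calculus of a Hermitian matrix `a` by a function `f : ℝ → ℝ` on its eigenvalues. -/
noncomputable def funCalc {n : ℕ} (f : ℝ → ℝ) (a : Matrix (Fin n) (Fin n) ℂ)
    (ha : a.IsHermitian) : Matrix (Fin n) (Fin n) ℂ :=
  (ha.eigenvectorUnitary : Matrix (Fin n) (Fin n) ℂ) *
    Matrix.diagonal (fun i => (f (ha.eigenvalues i) : ℂ)) *
    star (ha.eigenvectorUnitary : Matrix (Fin n) (Fin n) ℂ)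

/-- The absolute value `|a| = (a^* a)^{1/2}` of a matrix. -/
noncomputable def matAbs {n : ℕ} (a : Matrix (Fin n) (Fin n) ℂ) : Matrix (Fin n) (Fin n) ℂ :=
  ((Matrix.posSemidef_conjTranspose_mul_self a).1.eigenvectorUnitary : Matrix (Fin n) (Fin n) ℂ) *
    diagonal ((↑) ∘ (√·) ∘ (Matrix.posSemidef_conjTranspose_mul_self a).1.eigenvalues) *
    (star (Matrix.posSemidef_conjTranspose_mul_self a).1.eigenvectorUnitary : Matrix (Fin n) (Fin n) ℂ)

theorem matAbs_isHermitian {n : ℕ} (a : Matrix (Fin n) (Fin n) ℂ) : (matAbs a).IsHermitian :=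
  isHermitian_mul_mul_conjTranspose _
    (isHermitian_diagonal_of_self_adjoint _ (by ext i; simp [Function.comp]))


open Polynomial

lemma charpoly_unitary_conj {n : ℕ} (U : Matrix.unitaryGroup (Fin n) ℂ)
    (D : Matrix (Fin n) (Fin n) ℂ) :
    ((U : Matrix (Fin n) (Fin n) ℂ) * D * star (U : Matrix (Fin n) (Fin n) ℂ)).charpoly
      = D.charpoly := by
  set V : Matrix (Fin n) (Fin n) ℂ := (U : Matrix (Fin n) (Fin n) ℂ) with hV
  have hUV : V * star V = 1 := Matrix.mem_unitaryGroup_iff.mp U.2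
  have hVU : star V * V = 1 := Matrix.mem_unitaryGroup_iff'.mp U.2
  have key : Matrix.charmatrix (V * D * star V)
      = (C : ℂ →+* ℂ[X]).mapMatrix V * Matrix.charmatrix D
        * (C : ℂ →+* ℂ[X]).mapMatrix (star V) := by
    unfold Matrix.charmatrix
    rw [mul_sub, sub_mul]
    congr 1
    · rw [← (Matrix.scalar_commute (X : ℂ[X]) (fun r' => Commute.all _ _)
        ((C : ℂ →+* ℂ[X]).mapMatrix V)).eq, mul_assoc, ← _root_.map_mul, hUV,
        _root_.map_one ((C : ℂ →+* ℂ[X]).mapMatrix), mul_one]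
    · rw [← _root_.map_mul, ← _root_.map_mul]
  rw [Matrix.charpoly, Matrix.charpoly, key, Matrix.det_mul, Matrix.det_mul,
    mul_comm, ← mul_assoc, ← Matrix.det_mul,
    ← _root_.map_mul ((C : ℂ →+* ℂ[X]).mapMatrix) (star V) V, hVU,
    _root_.map_one ((C : ℂ →+* ℂ[X]).mapMatrix), Matrix.det_one, one_mul]

lemma roots_charpoly_diagonal {n : ℕ} (e : Fin n → ℂ) :
    (Matrix.diagonal e).charpoly.roots = Finset.univ.val.map e := by
  have h1 : (Matrix.diagonal e).charpoly = ∏ i, (X - C (e i)) := by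
    rw [Matrix.charpoly]
    have h2 : Matrix.charmatrix (Matrix.diagonal e)
        = Matrix.diagonal (fun i => (X : ℂ[X]) - C (e i)) := by
      ext i j
      by_cases h : i = j
      · subst h; simp [Matrix.charmatrix_apply, Matrix.diagonal_apply]
      · simp [Matrix.charmatrix_apply, Matrix.diagonal_apply, h]
    rw [h2, Matrix.det_diagonal]
  rw [h1]
  have h3 := Polynomial.roots_multiset_prod_X_sub_C (Finset.univ.val.map e)
  rw [Multiset.map_map] at h3
  rw [Finset.prod_eq_multiset_prod]
  exact h3

lemma eigs_multiset {n : ℕ} {b : Matrix (Fin n) (Fin n) ℂ} (hb : b.IsHermitian)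
    (U : Matrix.unitaryGroup (Fin n) ℂ) (e : Fin n → ℝ)
    (h : b = (U : Matrix (Fin n) (Fin n) ℂ) * Matrix.diagonal (fun i => (e i : ℂ))
      * star (U : Matrix (Fin n) (Fin n) ℂ)) :
    Finset.univ.val.map hb.eigenvalues = Finset.univ.val.map e := by
  have c1 : b.charpoly = (Matrix.diagonal (fun i => (e i : ℂ))).charpoly := by
    rw [h]; exact charpoly_unitary_conj U _
  have c2 : b.charpoly
      = (Matrix.diagonal (fun i => ((hb.eigenvalues i : ℝ) : ℂ))).charpoly := by
    conv_lhs => rw [hb.spectral_theorem]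
    exact charpoly_unitary_conj hb.eigenvectorUnitary _
  have h4 := congrArg Polynomial.roots (c2.symm.trans c1)
  rw [roots_charpoly_diagonal, roots_charpoly_diagonal] at h4
  apply Multiset.map_injective Complex.ofReal_injective
  simpa [Multiset.map_map, Function.comp_def] using h4

lemma mono_eq_of_multiset {n : ℕ} {u v : Fin n → ℝ} (hu : Monotone u) (hv : Monotone v)
    (h : Finset.univ.val.map u = Finset.univ.val.map v) : u = v := by
  rw [Fin.univ_val_map, Fin.univ_val_map] at h
  exact List.ofFn_injective (List.Perm.eq_of_sortedLE
    (List.sortedLE_ofFn_iff.mpr hu) (List.sortedLE_ofFn_iff.mpr hv) (Multiset.coe_eq_coe.mp h))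

lemma perm_map_multiset {n : ℕ} (σ : Equiv.Perm (Fin n)) (u : Fin n → ℝ) :
    Finset.univ.val.map (u ∘ σ) = Finset.univ.val.map u := by
  conv_rhs => rw [← Finset.map_univ_equiv σ]
  rw [Finset.map_val, Multiset.map_map]
  rfl

lemma eigDesc_eq {n : ℕ} {b : Matrix (Fin n) (Fin n) ℂ} (hb : b.IsHermitian)
    (U : Matrix.unitaryGroup (Fin n) ℂ) (e : Fin n → ℝ) (σ : Equiv.Perm (Fin n))
    (hmono : Monotone (e ∘ σ))
    (h : b = (U : Matrix (Fin n) (Fin n) ℂ) * Matrix.diagonal (fun i => (e i : ℂ))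
      * star (U : Matrix (Fin n) (Fin n) ℂ)) (i : Fin n) :
    eigDesc b hb i = e (σ i.rev) := by
  have hms : Finset.univ.val.map (hb.eigenvalues ∘ Tuple.sort hb.eigenvalues)
      = Finset.univ.val.map (e ∘ σ) := by
    rw [perm_map_multiset, perm_map_multiset]
    exact eigs_multiset hb U e h
  have h2 := mono_eq_of_multiset (Tuple.monotone_sort hb.eigenvalues) hmono hms
  unfold eigDesc
  exact congrFun h2 i.rev

/-- the Choquet-type trace is additive on sums of monotone increasing
functional calculi of a fixed positive semidefinite matrix. -/
theorem stmt4 (n : ℕ) (α : ℕ → ℝ) (hα0 : α 0 = 0)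
    (hmono : ∀ i j : ℕ, i ≤ j → j ≤ n → α i ≤ α j)
    (a : Matrix (Fin n) (Fin n) ℂ) (ha : a.PosSemidef) (f g : ℝ → ℝ)
    (hf : MonotoneOn f (Set.range ha.1.eigenvalues))
    (hg : MonotoneOn g (Set.range ha.1.eigenvalues))
    (hf0 : ∀ i, 0 ≤ f (ha.1.eigenvalues i)) (hg0 : ∀ i, 0 ≤ g (ha.1.eigenvalues i))
    (h1 : (funCalc f a ha.1).IsHermitian) (h2 : (funCalc g a ha.1).IsHermitian)
    (h3 : (funCalc f a ha.1 + funCalc g a ha.1).IsHermitian) :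
    choquetTrace α (funCalc f a ha.1 + funCalc g a ha.1) h3
      = choquetTrace α (funCalc f a ha.1) h1 + choquetTrace α (funCalc g a ha.1) h2 := by
    classical
  set lam := ha.1.eigenvalues with hlam
  set σ := Tuple.sort lam with hσ
  set U := ha.1.eigenvectorUnitary with hU
  have hmonoσ : Monotone (lam ∘ σ) := Tuple.monotone_sort lam
  have hmf : Monotone ((fun i => f (lam i)) ∘ σ) := fun i j hij =>
    hf ⟨σ i, rfl⟩ ⟨σ j, rfl⟩ (hmonoσ hij)
  have hmg : Monotone ((fun i => g (lam i)) ∘ σ) := fun i j hij =>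
    hg ⟨σ i, rfl⟩ ⟨σ j, rfl⟩ (hmonoσ hij)
  have hmfg : Monotone ((fun i => f (lam i) + g (lam i)) ∘ σ) := fun i j hij =>
    add_le_add (hmf hij) (hmg hij)
  have hF : funCalc f a ha.1 = (U : Matrix (Fin n) (Fin n) ℂ)
      * Matrix.diagonal (fun i => ((f (lam i) : ℝ) : ℂ))
      * star (U : Matrix (Fin n) (Fin n) ℂ) := rfl
  have hG : funCalc g a ha.1 = (U : Matrix (Fin n) (Fin n) ℂ)
      * Matrix.diagonal (fun i => ((g (lam i) : ℝ) : ℂ))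
      * star (U : Matrix (Fin n) (Fin n) ℂ) := rfl
  have hsum : funCalc f a ha.1 + funCalc g a ha.1 = (U : Matrix (Fin n) (Fin n) ℂ)
      * Matrix.diagonal (fun i => ((f (lam i) + g (lam i) : ℝ) : ℂ))
      * star (U : Matrix (Fin n) (Fin n) ℂ) := by
    have hd : Matrix.diagonal (fun i => ((f (lam i) + g (lam i) : ℝ) : ℂ))
        = Matrix.diagonal (fun i => ((f (lam i) : ℝ) : ℂ))
          + Matrix.diagonal (fun i => ((g (lam i) : ℝ) : ℂ)) := by
      rw [Matrix.diagonal_add]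
      congr 1
      funext i
      push_cast
      ring
    rw [hF, hG, hd, Matrix.mul_add, Matrix.add_mul]
  have keyF : ∀ i, eigDesc (funCalc f a ha.1) h1 i = f (lam (σ i.rev)) :=
    fun i => eigDesc_eq h1 U (fun j => f (lam j)) σ hmf hF i
  have keyG : ∀ i, eigDesc (funCalc g a ha.1) h2 i = g (lam (σ i.rev)) :=
    fun i => eigDesc_eq h2 U (fun j => g (lam j)) σ hmg hG i
  have keyS : ∀ i, eigDesc (funCalc f a ha.1 + funCalc g a ha.1) h3 i
      = f (lam (σ i.rev)) + g (lam (σ i.rev)) :=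
    fun i => eigDesc_eq h3 U (fun j => f (lam j) + g (lam j)) σ hmfg hsum i
  have heig : ∀ k, eigN (funCalc f a ha.1 + funCalc g a ha.1) h3 k
      = eigN (funCalc f a ha.1) h1 k + eigN (funCalc g a ha.1) h2 k := by
    intro k
    unfold eigN
    split_ifs with h
    · rw [keyS, keyF, keyG]
    · ring
  unfold choquetTrace
  rw [← Finset.sum_add_distrib]
  refine Finset.sum_congr rfl fun i _ => ?_
  rw [heig, heig]
  ring
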